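/- In the ring ℚ((y))[[q]], define T = 8·Σ_{k≥1} y^k/k³ + 12·Σ_{k,n≥1} q^{kn}/k³ + 8·Σ_{k,n≥1} (y^k + y^{−k})·q^{kn}/k³ + 2·Σ_{k,n≥1} (y^{2k} + y^{−2k})·q^{(2n−1)k}/k³, define J = −Σ_{k≥1} y^k − 1/2 − Σ_{k,r≥1} (y^k − y^{−k})·q^{kr}, and define G₁ = −Σ_{k,r≥1} (y^{2k} − y^{−2k})·q^{k(2r−1)}. Then (y·d/dy)³ T = −4 − 8·J − 16·G₁. -/

import Mathlib

noncomputable section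

open scoped BigOperators

/-- The variable `y`, as a Laurent series. -/
def y : LaurentSeries ℚ := HahnSeries.single (1 : ℤ) (1 : ℚ)

/-- The operator `y·d/dy` on Laurent series: it multiplies the coefficient of `y^k` by `k`. -/
def Dy (f : LaurentSeries ℚ) : LaurentSeries ℚ where
  coeff k := (k : ℚ) * f.coeff k
  isPWO_support' := f.isPWO_support.mono (by
    intro k hk
    simp only [Function.mem_support, ne_eq] at hk ⊢
    exact fun h => hk (by rw [h, mul_zero]))

/-- The operator `y·d/dy` on `ℚ((y))[[q]]`, acting on each `q`-coefficient. -/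
def DyP (F : PowerSeries (LaurentSeries ℚ)) : PowerSeries (LaurentSeries ℚ) :=
  PowerSeries.mk fun d => Dy (PowerSeries.coeff d F)

/-- `T = 8·Σ_{k≥1} y^k/k³ + 12·Σ_{k,n≥1} q^{kn}/k³ + 8·Σ_{k,n≥1} (y^k+y^{−k})q^{kn}/k³
  + 2·Σ_{k,n≥1} (y^{2k}+y^{−2k})q^{(2n−1)k}/k³` in `ℚ((y))[[q]]`. -/
def T : PowerSeries (LaurentSeries ℚ) :=
  PowerSeries.mk fun d =>
    if d = 0 then
      HahnSeries.ofPowerSeries ℤ ℚ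
        (PowerSeries.mk fun k => if k = 0 then 0 else 8 / (k : ℚ)^3)
    else
      12 * (∑ k ∈ d.divisors, 1 / (k : LaurentSeries ℚ)^3)
      + 8 * (∑ k ∈ d.divisors, (y^(k:ℤ) + y^(-(k:ℤ))) / (k : LaurentSeries ℚ)^3)
      + 2 * (∑ k ∈ d.divisors.filter (fun k => Odd (d / k)),
          (y^(2*(k:ℤ)) + y^(-(2*(k:ℤ)))) / (k : LaurentSeries ℚ)^3)

/-- `J = −Σ_{k≥1} y^k − 1/2 − Σ_{k,r≥1} (y^k − y^{−k})q^{kr}`, the expansion of the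
deformed Eisenstein series `J_{2,1}`. -/
def J : PowerSeries (LaurentSeries ℚ) :=
  PowerSeries.mk fun d =>
    if d = 0 then
      HahnSeries.ofPowerSeries ℤ ℚ
        (PowerSeries.mk fun k => if k = 0 then -(1/2) else -1)
    else -(∑ k ∈ d.divisors, (y^(k:ℤ) - y^(-(k:ℤ))))

/-- `G₁ = −Σ_{k,r≥1} (y^{2k} − y^{−2k})q^{k(2r−1)}`, the expansion of `J_{4,1}(2z,2τ)`. -/
def G₁ : PowerSeries (LaurentSeries ℚ) :=
  PowerSeries.mk fun d =>
    if d = 0 then 0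
    else -(∑ k ∈ d.divisors.filter (fun k => Odd (d / k)),
        (y^(2*(k:ℤ)) - y^(-(2*(k:ℤ)))))

/-! ### Auxiliary lemmas -/

lemma Dy_coeff (f : LaurentSeries ℚ) (k : ℤ) : (Dy f).coeff k = (k:ℚ) * f.coeff k := rfl

lemma Dy_add (f g : LaurentSeries ℚ) : Dy (f + g) = Dy f + Dy g := by
  ext k; simp [Dy_coeff, mul_add]

lemma Dy_zero : Dy 0 = 0 := by ext k; simp [Dy_coeff]

/-- `Dy` as an additive monoid homomorphism. -/
def DyHom : LaurentSeries ℚ →+ LaurentSeries ℚ :=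
  { toFun := Dy, map_zero' := Dy_zero, map_add' := Dy_add }

lemma Dy_sum {ι : Type*} (s : Finset ι) (f : ι → LaurentSeries ℚ) :
    Dy (∑ i ∈ s, f i) = ∑ i ∈ s, Dy (f i) := map_sum DyHom f s

lemma Dy_single (a : ℤ) (c : ℚ) :
    Dy (HahnSeries.single a c) = HahnSeries.single a ((a:ℚ) * c) := by
  ext k
  rw [Dy_coeff, HahnSeries.coeff_single, HahnSeries.coeff_single]
  split_ifs with h
  · subst h; rfl
  · exact mul_zero _

lemma y_zpow (n : ℤ) : y ^ n = HahnSeries.single n 1 := by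
  have h1 : ∀ m : ℕ, y ^ (m:ℤ) = HahnSeries.single (m:ℤ) 1 := by
    intro m
    rw [zpow_natCast, y, HahnSeries.single_pow]
    simp
  obtain ⟨m, rfl | rfl⟩ := Int.eq_nat_or_neg n
  · exact h1 m
  · rw [zpow_neg, h1 m]
    refine inv_eq_of_mul_eq_one_left ?_
    rw [HahnSeries.single_mul_single, neg_add_cancel, one_mul, HahnSeries.single_zero_one]

lemma term_div (a : ℤ) (k : ℕ) :
    y ^ a / (k : LaurentSeries ℚ) ^ 3 = HahnSeries.single a (1 / (k:ℚ)^3) := by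
  have hC : ((k : LaurentSeries ℚ)) = HahnSeries.C ((k:ℚ)) := (map_natCast _ k).symm
  rw [y_zpow, hC, div_eq_mul_inv, ← map_pow, ← map_inv₀, HahnSeries.C_apply,
    HahnSeries.single_mul_single, add_zero, one_mul, one_div]

lemma one_div_k3 (k : ℕ) :
    (1:LaurentSeries ℚ)/(k:LaurentSeries ℚ)^3 = HahnSeries.single 0 (1/(k:ℚ)^3) := by
  have := term_div 0 k; rwa [zpow_zero] at this

lemma C_mul_single (c : ℚ) (a : ℤ) (r : ℚ) :
    HahnSeries.C c * HahnSeries.single a r = HahnSeries.single a (c * r) := by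
  rw [HahnSeries.C_apply, HahnSeries.single_mul_single, zero_add]

lemma single_neg' (a : ℤ) (r : ℚ) :
    HahnSeries.single a (-r) = -HahnSeries.single a r := by
  ext k; simp [HahnSeries.coeff_single]

lemma Dy_C_mul (c : ℚ) (f : LaurentSeries ℚ) :
    Dy (HahnSeries.C c * f) = HahnSeries.C c * Dy f := by
  ext k
  rw [Dy_coeff, HahnSeries.C_apply, HahnSeries.coeff_single_zero_mul,
    HahnSeries.coeff_single_zero_mul, Dy_coeff]
  ring

lemma ofPS_coeff_neg (φ : PowerSeries ℚ) (n : ℤ) (hn : n < 0) :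
    (HahnSeries.ofPowerSeries ℤ ℚ φ).coeff n = 0 := by
  rw [HahnSeries.ofPowerSeries_apply, HahnSeries.embDomain_notin_range]
  simp only [Set.mem_range, RelEmbedding.coe_mk, Function.Embedding.coeFn_mk]
  rintro ⟨m, rfl⟩
  exact absurd hn (not_lt.mpr (Int.natCast_nonneg m))

/-- In `ℚ((y))[[q]]`: `(y·d/dy)³ T = −4 − 8·J − 16·G₁`. -/
theorem third_derivative_T : DyP (DyP (DyP T)) = -4 - 8 * J - 16 * G₁ := by
  ext d n
  rw [DyP, DyP, DyP, PowerSeries.coeff_mk, PowerSeries.coeff_mk, PowerSeries.coeff_mk]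
  rw [map_sub, map_sub,
    show ((-4 : PowerSeries (LaurentSeries ℚ))) = PowerSeries.C (-4) by rw [map_neg, map_ofNat],
    show ((8 : PowerSeries (LaurentSeries ℚ))) = PowerSeries.C 8 from (map_ofNat _ 8).symm,
    show ((16 : PowerSeries (LaurentSeries ℚ))) = PowerSeries.C 16 from (map_ofNat _ 16).symm,
    PowerSeries.coeff_C_mul, PowerSeries.coeff_C_mul, PowerSeries.coeff_C]
  rw [T, J, G₁, PowerSeries.coeff_mk, PowerSeries.coeff_mk, PowerSeries.coeff_mk]
  by_cases hd : d = 0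
  · rw [if_pos hd, if_pos hd, if_pos hd, if_pos hd]
    rw [Dy_coeff, Dy_coeff, Dy_coeff,
      show ((-4:LaurentSeries ℚ)) = HahnSeries.C (-4) by rw [map_neg, map_ofNat],
      show ((8:LaurentSeries ℚ)) = HahnSeries.C 8 from (map_ofNat _ 8).symm,
      HahnSeries.coeff_sub, HahnSeries.coeff_sub, HahnSeries.C_apply, HahnSeries.C_apply,
      HahnSeries.coeff_single, HahnSeries.coeff_single_zero_mul, mul_zero,
      HahnSeries.coeff_zero, sub_zero]
    cases n with
    | ofNat m =>
      rw [show (Int.ofNat m) = (m:ℤ) from rfl, HahnSeries.ofPowerSeries_apply_coeff,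
        HahnSeries.ofPowerSeries_apply_coeff, PowerSeries.coeff_mk, PowerSeries.coeff_mk]
      by_cases hm : m = 0
      · subst hm; norm_num
      · rw [if_neg hm, if_neg hm, if_neg (by exact_mod_cast hm : (m:ℤ) ≠ 0)]
        have hm' : (m:ℚ) ≠ 0 := Nat.cast_ne_zero.mpr hm
        push_cast
        field_simp
        ring
    | negSucc m =>
      rw [ofPS_coeff_neg _ _ (Int.negSucc_lt_zero m), ofPS_coeff_neg _ _ (Int.negSucc_lt_zero m),
        if_neg (by simp [Int.negSucc_ne_zero])]
      simp
  · rw [if_neg hd, if_neg hd, if_neg hd, if_neg hd]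
    congr 1
    have hk0 : ∀ k ∈ d.divisors, (k:ℚ) ≠ 0 := fun k hk =>
      Nat.cast_ne_zero.mpr (Nat.pos_of_mem_divisors hk).ne'
    have hS1 : (∑ k ∈ d.divisors, 1/(k:LaurentSeries ℚ)^3)
        = ∑ k ∈ d.divisors, HahnSeries.single (0:ℤ) (1/(k:ℚ)^3) :=
      Finset.sum_congr rfl fun k _ => one_div_k3 k
    have hS2 : (∑ k ∈ d.divisors, (y^(k:ℤ) + y^(-(k:ℤ))) / (k : LaurentSeries ℚ)^3)
        = ∑ k ∈ d.divisors,
            (HahnSeries.single (k:ℤ) (1/(k:ℚ)^3) + HahnSeries.single (-(k:ℤ)) (1/(k:ℚ)^3)) :=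
      Finset.sum_congr rfl fun k _ => by rw [add_div, term_div, term_div]
    have hS3 : (∑ k ∈ d.divisors.filter (fun k => Odd (d / k)),
            (y^(2*(k:ℤ)) + y^(-(2*(k:ℤ)))) / (k : LaurentSeries ℚ)^3)
        = ∑ k ∈ d.divisors.filter (fun k => Odd (d / k)),
            (HahnSeries.single (2*(k:ℤ)) (1/(k:ℚ)^3)
              + HahnSeries.single (-(2*(k:ℤ))) (1/(k:ℚ)^3)) :=
      Finset.sum_congr rfl fun k _ => by rw [add_div, term_div, term_div]
    have hJ : (∑ k ∈ d.divisors, (y^(k:ℤ) - y^(-(k:ℤ))))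
        = ∑ k ∈ d.divisors,
            (HahnSeries.single (k:ℤ) (1:ℚ) - HahnSeries.single (-(k:ℤ)) (1:ℚ)) :=
      Finset.sum_congr rfl fun k _ => by rw [y_zpow, y_zpow]
    have hG : (∑ k ∈ d.divisors.filter (fun k => Odd (d / k)),
            (y^(2*(k:ℤ)) - y^(-(2*(k:ℤ)))))
        = ∑ k ∈ d.divisors.filter (fun k => Odd (d / k)),
            (HahnSeries.single (2*(k:ℤ)) (1:ℚ) - HahnSeries.single (-(2*(k:ℤ))) (1:ℚ)) :=
      Finset.sum_congr rfl fun k _ => by rw [y_zpow, y_zpow]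
    rw [hS1, hS2, hS3, hJ, hG,
      show ((12:LaurentSeries ℚ)) = HahnSeries.C 12 from (map_ofNat _ 12).symm,
      show ((8:LaurentSeries ℚ)) = HahnSeries.C 8 from (map_ofNat _ 8).symm,
      show ((2:LaurentSeries ℚ)) = HahnSeries.C 2 from (map_ofNat _ 2).symm,
      show ((16:LaurentSeries ℚ)) = HahnSeries.C 16 from (map_ofNat _ 16).symm]
    simp only [Dy_add, Dy_C_mul, Dy_sum, Dy_single, Int.cast_zero, zero_mul,
      HahnSeries.single_eq_zero, Finset.sum_const_zero, mul_zero, zero_add,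
      mul_neg, sub_neg_eq_add, zero_sub, neg_neg]
    ring_nf
    congr 1
    · congr 1
      refine Finset.sum_congr rfl fun k hk => ?_
      have h := hk0 k hk
      rw [sub_eq_add_neg, ← single_neg']
      congr 1
      · refine congrArg _ ?_
        push_cast
        field_simp
      · refine congrArg _ ?_
        push_cast
        field_simp
    · rw [Finset.mul_sum, Finset.mul_sum]
      refine Finset.sum_congr rfl fun k hk => ?_
      have h := hk0 k (Finset.mem_filter.mp hk).1
      rw [mul_add, C_mul_single, C_mul_single, mul_sub, C_mul_single, C_mul_single,
        sub_eq_add_neg, ← single_neg']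
      congr 1
      · refine congrArg _ ?_
        push_cast
        field_simp
        ring
      · refine congrArg _ ?_
        push_cast
        field_simp
        ring

end
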